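/- arXiv:2601.21834 — 2 statements merged into one kernel-verified Lean document; each statement's English description precedes it below -/
import Mathlib

section
/- Let O be a complete discrete valuation ring with maximal ideal J(O) and residue field k, let P be a finite group, and let M be a finitely generated O-free O[P]-module with a P-stable O-basis X (a permutation module). Then any P-stable k-basis Y of M/J(O)M lifts to a P-stable O-basis of M: there exists a P-stable O-basis of M whose image in M/J(O)M is Y. -/
section Helpers


variable {O : Type*} [CommRing O] {M : Type*} [AddCommGroup M] [Module O M]

/-- Membership in `I • ⊤` in terms of basis coordinates. -/
lemma mem_ismt_iff {ι : Type*} (b : Module.Basis ι O M) (I : Ideal O) (m : M) :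
    m ∈ (I • ⊤ : Submodule O M) ↔ ∀ i, b.repr m i ∈ I := by
  constructor
  · intro h
    refine Submodule.smul_induction_on h ?_ ?_
    · intro a ha n _ i
      rw [map_smul]
      exact I.mul_mem_right _ ha
    · intro x y hx hy i
      rw [map_add]
      exact I.add_mem (hx i) (hy i)
  · intro h
    have hm : m = Finsupp.linearCombination O b (b.repr m) := (b.linearCombination_repr m).symm
    rw [hm, Finsupp.linearCombination_apply, Finsupp.sum]
    exact Submodule.sum_mem _ fun i _ => Submodule.smul_mem_smul (h i) trivial

variable {P : Type*} [Group P] [DistribMulAction P M] [SMulCommClass P O M]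

lemma smul_mem_ismt (I : Ideal O) (p : P) {m : M} (h : m ∈ (I • ⊤ : Submodule O M)) :
    p • m ∈ (I • ⊤ : Submodule O M) := by
  refine Submodule.smul_induction_on h ?_ ?_
  · intro a ha n _
    rw [smul_comm]
    exact Submodule.smul_mem_smul ha trivial
  · intro x y hx hy
    rw [smul_add]
    exact Submodule.add_mem _ hx hy

/-- Coordinates of `p • m` with respect to a `P`-stable basis. -/
lemma repr_smul_eq {X : Set M} (bX : Module.Basis X O M) (hbX : ∀ x : X, bX x = (x : M))
    (hX : ∀ p : P, ∀ x ∈ X, p • x ∈ X) (p : P) (m : M) (x : X) :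
    bX.repr (p • m) x = bX.repr m ⟨p⁻¹ • (x : M), hX p⁻¹ x x.2⟩ := by
  let L1 : M →ₗ[O] O :=
    (Finsupp.lapply x) ∘ₗ (bX.repr : M →ₗ[O] X →₀ O) ∘ₗ (DistribSMul.toLinearMap O M p)
  let L2 : M →ₗ[O] O :=
    (Finsupp.lapply (⟨p⁻¹ • (x : M), hX p⁻¹ x x.2⟩ : X)) ∘ₗ (bX.repr : M →ₗ[O] X →₀ O)
  have hL : L1 = L2 := by
    apply bX.ext
    intro x₀
    have h1 : p • (bX x₀) = bX ⟨p • (x₀ : M), hX p x₀ x₀.2⟩ := by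
      rw [hbX, hbX]
    simp only [L1, L2, LinearMap.comp_apply, DistribSMul.toLinearMap_apply,
      Finsupp.lapply_apply, h1, Module.Basis.repr_self]
    classical
    simp only [LinearEquiv.coe_coe, Module.Basis.repr_self]
    rw [Finsupp.single_apply, Finsupp.single_apply]
    congr 1
    simp only [eq_iff_iff]
    constructor
    · rintro rfl
      ext
      simp
    · intro hh
      ext
      have : (x₀ : M) = p⁻¹ • (x : M) := congrArg Subtype.val hh
      simp [this]
  exact congrArg (fun (L : M →ₗ[O] O) => L m) hL


/-- A coset-fixed lift: if `m₀` is fixed by `Q` modulo `I•⊤`, then there is `m`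
congruent to `m₀` mod `I•⊤` that is honestly fixed by `Q`. -/
lemma exists_fixed_lift {X : Set M} [Finite X] (bX : Module.Basis X O M)
    (hbX : ∀ x : X, bX x = (x : M)) (hX : ∀ p : P, ∀ x ∈ X, p • x ∈ X)
    (I : Ideal O) (Q : Subgroup P) (m₀ : M)
    (hm₀ : ∀ q ∈ Q, q • m₀ - m₀ ∈ (I • ⊤ : Submodule O M)) :
    ∃ m : M, m - m₀ ∈ (I • ⊤ : Submodule O M) ∧ ∀ q ∈ Q, q • m = m := by
  classical
  -- the Q-orbit equivalence on X
  let st : Setoid X :=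
    { r := fun x x' => ∃ q ∈ Q, q • (x : M) = (x' : M)
      iseqv := by
        constructor
        · intro x; exact ⟨1, Q.one_mem, one_smul _ _⟩
        · rintro x x' ⟨q, hq, hqx⟩
          exact ⟨q⁻¹, Q.inv_mem hq, by rw [← hqx, inv_smul_smul]⟩
        · rintro x x' x'' ⟨q, hq, hqx⟩ ⟨q', hq', hqx'⟩
          exact ⟨q' * q, Q.mul_mem hq' hq, by rw [mul_smul, hqx, hqx']⟩ }
  let rep : X → X := fun x => (Quotient.mk st x).out
  have hrep_rel : ∀ x : X, st.r (rep x) x := by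
    intro x
    exact Quotient.exact (Quotient.out_eq (Quotient.mk st x))
  have hrep_const : ∀ x x' : X, st.r x x' → rep x = rep x' := by
    intro x x' h
    simp only [rep]
    congr 1
    exact Quotient.sound h
  -- coordinates of m₀, made constant on Q-orbits
  let c : X → O := fun x => bX.repr m₀ (rep x)
  let m : M := bX.repr.symm (Finsupp.equivFunOnFinite.symm c)
  have hreprm : ∀ x : X, bX.repr m x = c x := by
    intro x
    simp only [m, LinearEquiv.apply_symm_apply]
    rfl
  refine ⟨m, ?_, ?_⟩
  · rw [mem_ismt_iff bX]
    intro x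
    have hx : bX.repr (m - m₀) x = bX.repr m₀ (rep x) - bX.repr m₀ x := by
      rw [map_sub, Finsupp.sub_apply, hreprm]
    rw [hx]
    obtain ⟨q, hq, hqx⟩ := hrep_rel x
    have hkey := hm₀ q hq
    rw [mem_ismt_iff bX] at hkey
    have h2 := hkey x
    rw [map_sub, Finsupp.sub_apply, repr_smul_eq bX hbX hX] at h2
    have h3 : (⟨q⁻¹ • (x : M), hX q⁻¹ x x.2⟩ : X) = rep x := by
      ext
      show q⁻¹ • (x : M) = (rep x : M)
      rw [← hqx, inv_smul_smul]
    rwa [h3] at h2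
  · intro q hq
    apply bX.repr.injective
    ext x
    rw [repr_smul_eq bX hbX hX, hreprm, hreprm]
    exact congrArg (bX.repr m₀) (hrep_const _ _ ⟨q, hq, smul_inv_smul q (x : M)⟩)

/-- The action of `p : P` on `M ⧸ I•⊤`. -/
noncomputable def qact (I : Ideal O) (p : P) :
    (M ⧸ (I • ⊤ : Submodule O M)) →ₗ[O] (M ⧸ (I • ⊤ : Submodule O M)) :=
  Submodule.mapQ _ _ (DistribMulAction.toLinearMap O M p) (fun _ hm => smul_mem_ismt I p hm)

lemma qact_mk (I : Ideal O) (p : P) (m : M) :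
    qact I p (Submodule.Quotient.mk m) = Submodule.Quotient.mk (p • m) :=
  rfl

lemma qact_qact (I : Ideal O) (p p' : P) (y : M ⧸ (I • ⊤ : Submodule O M)) :
    qact I p (qact I p' y) = qact I (p * p') y := by
  obtain ⟨m, rfl⟩ := Submodule.Quotient.mk_surjective _ y
  rw [qact_mk, qact_mk, qact_mk, mul_smul]

lemma qact_one (I : Ideal O) (y : M ⧸ (I • ⊤ : Submodule O M)) : qact I (1 : P) y = y := by
  obtain ⟨m, rfl⟩ := Submodule.Quotient.mk_surjective _ y
  rw [qact_mk, one_smul]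

/-- Stabilizer of an element of the quotient. -/
noncomputable def stab (I : Ideal O) (y : M ⧸ (I • ⊤ : Submodule O M)) : Subgroup P where
  carrier := {p | qact I p y = y}
  one_mem' := qact_one I y
  mul_mem' := by
    intro a b ha hb
    show qact I (a * b) y = y
    rw [← qact_qact, hb, ha]
  inv_mem' := by
    intro a ha
    show qact I a⁻¹ y = y
    conv_lhs => rw [← ha]
    rw [qact_qact, inv_mul_cancel, qact_one]

/-- Every element of the quotient has a lift fixed by its stabilizer. -/
lemma exists_good_lift {X : Set M} [Finite X] (bX : Module.Basis X O M)
    (hbX : ∀ x : X, bX x = (x : M)) (hX : ∀ p : P, ∀ x ∈ X, p • x ∈ X)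
    (I : Ideal O) (y : M ⧸ (I • ⊤ : Submodule O M)) :
    ∃ m : M, Submodule.Quotient.mk m = y ∧ ∀ p : P, qact I p y = y → p • m = m := by
  obtain ⟨m₀, rfl⟩ := Submodule.Quotient.mk_surjective _ y
  have hstab : ∀ q : P, q ∈ stab (M := M) I (Submodule.Quotient.mk m₀) →
      q • m₀ - m₀ ∈ (I • ⊤ : Submodule O M) := by
    intro q hq
    have h : qact I q (Submodule.Quotient.mk m₀) = Submodule.Quotient.mk m₀ := hq
    rw [qact_mk] at h
    rw [← Submodule.Quotient.eq]
    exact h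
  obtain ⟨m, hm1, hm2⟩ :=
    exists_fixed_lift bX hbX hX I (stab I (Submodule.Quotient.mk m₀)) m₀ hstab
  refine ⟨m, ?_, fun p hp => hm2 p hp⟩
  rwa [Submodule.Quotient.eq]

/-- Scalars act through the residue ring on the quotient. -/
lemma osmul_eq (I : Ideal O) (a : O) (n : M ⧸ (I • ⊤ : Submodule O M)) :
    (Ideal.Quotient.mk I a) • n = a • n := by
  obtain ⟨m, rfl⟩ := Submodule.Quotient.mk_surjective _ n
  rw [Module.Quotient.mk_smul_mk, Submodule.Quotient.mk_smul]

lemma span_O_le_span_k (I : Ideal O) (S : Set (M ⧸ (I • ⊤ : Submodule O M)))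
    {n : M ⧸ (I • ⊤ : Submodule O M)} (hn : n ∈ Submodule.span O S) :
    n ∈ Submodule.span (O ⧸ I) S := by
  induction hn using Submodule.span_induction with
  | mem x hx => exact Submodule.subset_span hx
  | zero => exact Submodule.zero_mem _
  | add x y _ _ hx hy => exact Submodule.add_mem _ hx hy
  | smul a x _ hx =>
      rw [← osmul_eq]
      exact Submodule.smul_mem _ _ hx

end Helpers

/-- Lifting a `P`-stable basis of `M/J(O)M` to a `P`-stable basis of a permutation
`O[P]`-module `M`, where `O` is a complete (discrete valuation / local) ring with
maximal ideal `J(O)` and residue field `k = O/J(O)`.  The quotient `M/J(O)M` is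
formalized as `M ⧸ (J(O) • ⊤)`; a subset `Y` of it is a `k`-basis iff it spans it
as an `O`-module and every vanishing `O`-linear combination has all coefficients
in `J(O)`.  `P`-stability of `Y` is phrased via arbitrary lifts. -/
theorem stmt_7 {O : Type*} [CommRing O] [IsLocalRing O]
    [IsAdicComplete (IsLocalRing.maximalIdeal O) O]
    {P : Type*} [Group P] [Finite P]
    {M : Type*} [AddCommGroup M] [Module O M] [Module.Finite O M]
    [DistribMulAction P M] [SMulCommClass P O M]
    (X : Set M) (bX : Module.Basis X O M) (hbX : ∀ x : X, bX x = (x : M))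
    (hXstable : ∀ p : P, ∀ x ∈ X, p • x ∈ X)
    (Y : Set (M ⧸ (IsLocalRing.maximalIdeal O • ⊤ : Submodule O M)))
    (hYspan : Submodule.span O Y = ⊤)
    (hYindep : ∀ (s : Finset M) (c : M → O), (↑s : Set M) ⊆ {m : M | Submodule.Quotient.mk m ∈ Y} →
      Set.InjOn (fun m : M => (Submodule.Quotient.mk m :
          M ⧸ (IsLocalRing.maximalIdeal O • ⊤ : Submodule O M))) ↑s →
      (∑ m ∈ s, c m • (Submodule.Quotient.mk m :
          M ⧸ (IsLocalRing.maximalIdeal O • ⊤ : Submodule O M))) = 0 →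
      ∀ m ∈ s, c m ∈ IsLocalRing.maximalIdeal O)
    (hYstable : ∀ p : P, ∀ m : M,
      (Submodule.Quotient.mk m : M ⧸ (IsLocalRing.maximalIdeal O • ⊤ : Submodule O M)) ∈ Y →
      (Submodule.Quotient.mk (p • m) :
          M ⧸ (IsLocalRing.maximalIdeal O • ⊤ : Submodule O M)) ∈ Y) :
    ∃ Z : Set M, ∃ bZ : Module.Basis Z O M,
      (∀ z : Z, bZ z = (z : M)) ∧
      (∀ p : P, ∀ z ∈ Z, p • z ∈ Z) ∧
      (fun m : M => (Submodule.Quotient.mk m :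
          M ⧸ (IsLocalRing.maximalIdeal O • ⊤ : Submodule O M))) '' Z = Y := by
  classical
  have hXfin : Finite X := Module.Finite.finite_basis bX
  -- orbit setoid on the quotient
  let st : Setoid (M ⧸ ((IsLocalRing.maximalIdeal O) • ⊤ : Submodule O M)) :=
    { r := fun y y' => ∃ p : P, qact (IsLocalRing.maximalIdeal O) p y = y'
      iseqv := by
        constructor
        · intro y; exact ⟨1, qact_one (IsLocalRing.maximalIdeal O) y⟩
        · rintro y y' ⟨p, rfl⟩
          exact ⟨p⁻¹, by rw [qact_qact, inv_mul_cancel, qact_one]⟩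
        · rintro y y' y'' ⟨p, rfl⟩ ⟨p', rfl⟩
          exact ⟨p' * p, by rw [← qact_qact]⟩ }
  let rp : (M ⧸ ((IsLocalRing.maximalIdeal O) • ⊤ : Submodule O M)) → (M ⧸ ((IsLocalRing.maximalIdeal O) • ⊤ : Submodule O M)) :=
    fun y => (Quotient.mk st y).out
  have hrp_rel : ∀ y, st.r (rp y) y :=
    fun y => Quotient.exact (Quotient.out_eq (Quotient.mk st y))
  have hrp_const : ∀ y y', st.r y y' → rp y = rp y' := by
    intro y y' h
    simp only [rp]
    congr 1
    exact Quotient.sound h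
  choose gl hgl1 hgl2 using fun y => exists_good_lift bX hbX hXstable (IsLocalRing.maximalIdeal O) y
  choose pp hpp using hrp_rel
  let σ : (M ⧸ ((IsLocalRing.maximalIdeal O) • ⊤ : Submodule O M)) → M := fun y => pp y • gl (rp y)
  have hσwd : ∀ y (q : P), qact (IsLocalRing.maximalIdeal O) q (rp y) = y → q • gl (rp y) = σ y := by
    intro y q hq
    have h0 : qact (IsLocalRing.maximalIdeal O) (pp y)⁻¹ y = rp y := by
      have h0' := congrArg (qact (IsLocalRing.maximalIdeal O) (pp y)⁻¹) (hpp y)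
      rw [qact_qact, inv_mul_cancel, qact_one] at h0'
      exact h0'.symm
    have h1 : qact (IsLocalRing.maximalIdeal O) ((pp y)⁻¹ * q) (rp y) = rp y := by
      rw [← qact_qact, hq, h0]
    have h2 := hgl2 (rp y) ((pp y)⁻¹ * q) h1
    have h3 : pp y • ((pp y)⁻¹ * q) • gl (rp y) = q • gl (rp y) := by
      rw [smul_smul, mul_inv_cancel_left]
    rw [h2] at h3
    exact h3.symm
  have hσmk : ∀ y, Submodule.Quotient.mk (σ y) = y := by
    intro y
    show Submodule.Quotient.mk (pp y • gl (rp y)) = y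
    rw [← qact_mk, hgl1, hpp]
  have hσeq : ∀ (p : P) y, p • σ y = σ (qact (IsLocalRing.maximalIdeal O) p y) := by
    intro p y
    have hr : rp y = rp (qact (IsLocalRing.maximalIdeal O) p y) := hrp_const _ _ ⟨p, rfl⟩
    have h1 : qact (IsLocalRing.maximalIdeal O) (p * pp y) (rp (qact (IsLocalRing.maximalIdeal O) p y)) = qact (IsLocalRing.maximalIdeal O) p y := by
      rw [← hr, ← qact_qact, hpp]
    have h2 := hσwd (qact (IsLocalRing.maximalIdeal O) p y) (p * pp y) h1
    rw [← h2, ← hr, mul_smul]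
  have hσinj : Function.Injective σ := by
    intro y y' h
    rw [← hσmk y, ← hσmk y', h]
  have hqY : ∀ (p : P) y, y ∈ Y → qact (IsLocalRing.maximalIdeal O) p y ∈ Y := by
    intro p y hy
    rw [← hσmk y, qact_mk]
    exact hYstable p (σ y) (by rw [hσmk]; exact hy)
  -- the lifted set
  refine ⟨σ '' Y, ?_⟩
  have hZY : (fun m : M => (Submodule.Quotient.mk m :
      M ⧸ ((IsLocalRing.maximalIdeal O) • ⊤ : Submodule O M))) '' (σ '' Y) = Y := by
    ext y
    constructor
    · rintro ⟨m, ⟨y', hy', rfl⟩, rfl⟩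
      simpa only [hσmk y'] using hy'
    · intro hy
      exact ⟨σ y, ⟨y, hy, rfl⟩, hσmk y⟩
  have hZstable : ∀ p : P, ∀ z ∈ σ '' Y, p • z ∈ σ '' Y := by
    rintro p z ⟨y, hy, rfl⟩
    rw [hσeq]
    exact ⟨qact (IsLocalRing.maximalIdeal O) p y, hqY p y hy, rfl⟩
  -- span of Z
  have hspanZ : Submodule.span O (σ '' Y) = ⊤ := by
    have hle : (⊤ : Submodule O M) ≤ Submodule.span O (σ '' Y) ⊔
        (IsLocalRing.maximalIdeal O) • (⊤ : Submodule O M) := by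
      intro m _
      have h1 : (Submodule.Quotient.mk m :
          M ⧸ ((IsLocalRing.maximalIdeal O) • ⊤ : Submodule O M)) ∈
          Submodule.map (Submodule.mkQ ((IsLocalRing.maximalIdeal O) • ⊤ : Submodule O M))
            (Submodule.span O (σ '' Y)) := by
        rw [Submodule.map_span]
        have hfun : ⇑(Submodule.mkQ ((IsLocalRing.maximalIdeal O) • ⊤ : Submodule O M)) =
            (fun m : M => (Submodule.Quotient.mk m :
              M ⧸ ((IsLocalRing.maximalIdeal O) • ⊤ : Submodule O M))) := funext fun m => rfl
        rw [hfun, hZY, hYspan]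
        trivial
      obtain ⟨z, hz, hzm⟩ := h1
      have h2 : m - z ∈ ((IsLocalRing.maximalIdeal O) • ⊤ : Submodule O M) := by
        rw [← Submodule.Quotient.eq]
        exact hzm.symm
      have h3 : m = z + (m - z) := by abel
      rw [h3]
      exact Submodule.add_mem _ (Submodule.mem_sup_left hz) (Submodule.mem_sup_right h2)
    have hnak := Submodule.le_of_le_smul_of_le_jacobson_bot
      (N := Submodule.span O (σ '' Y)) (N' := (⊤ : Submodule O M))
      Module.Finite.fg_top (IsLocalRing.maximalIdeal_le_jacobson ⊥) hle
    exact top_le_iff.mp hnak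
  -- index bijection between X and Y
  have hcard : ∃ e : X ≃ Y, True := by
    letI : Field (O ⧸ IsLocalRing.maximalIdeal O) := Ideal.Quotient.field _
    have hinjσY : Function.Injective (fun y : Y => σ (y :
        M ⧸ ((IsLocalRing.maximalIdeal O) • ⊤ : Submodule O M))) :=
      fun a b h => Subtype.ext (hσinj h)
    -- `Y` is linearly independent over the residue field
    have hYind : LinearIndependent (O ⧸ IsLocalRing.maximalIdeal O)
        (fun y : Y => (y : M ⧸ ((IsLocalRing.maximalIdeal O) • ⊤ : Submodule O M))) := by
      rw [linearIndependent_iff]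
      intro l hl
      choose d hd using fun y : Y => Ideal.Quotient.mk_surjective (l y)
      set c : M → O := Function.extend (fun y : Y => σ (y : _)) d 0 with hcdef
      have hcσ : ∀ y : Y, c (σ (y : _)) = d y := fun y => hinjσY.extend_apply d 0 y
      have key := hYindep (l.support.image (fun y : Y => σ (y : _))) c ?_ ?_ ?_
      · ext y
        by_cases hy : y ∈ l.support
        · have h1 := key (σ (y : _)) (Finset.mem_image_of_mem _ hy)
          rw [hcσ] at h1
          rw [← hd y, Ideal.Quotient.eq_zero_iff_mem.mpr h1]
          rfl
        · simpa using Finsupp.notMem_support_iff.mp hy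
      · intro m hm
        simp only [Finset.coe_image, Set.mem_image, Finset.mem_coe] at hm
        obtain ⟨y, _, rfl⟩ := hm
        show Submodule.Quotient.mk (σ (y : _)) ∈ Y
        rw [hσmk]
        exact y.2
      · intro m1 hm1 m2 hm2 h12
        simp only [Finset.coe_image, Set.mem_image, Finset.mem_coe] at hm1 hm2
        obtain ⟨y1, _, rfl⟩ := hm1
        obtain ⟨y2, _, rfl⟩ := hm2
        simp only [hσmk] at h12
        rw [Subtype.ext h12]
      · rw [Finset.sum_image (fun y _ y' _ h => hinjσY h)]
        have hterm : ∀ y ∈ l.support, c (σ (y : _)) • (Submodule.Quotient.mk (σ (y : _)) :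
            M ⧸ ((IsLocalRing.maximalIdeal O) • ⊤ : Submodule O M)) = l y • (y : _) := by
          intro y _
          rw [hcσ, hσmk, ← hd y, osmul_eq]
        rw [Finset.sum_congr rfl hterm]
        rw [Finsupp.linearCombination_apply, Finsupp.sum] at hl
        exact hl
    -- `Y` spans over the residue field
    have hYsp : ⊤ ≤ Submodule.span (O ⧸ IsLocalRing.maximalIdeal O)
        (Set.range (fun y : Y => (y : M ⧸ ((IsLocalRing.maximalIdeal O) • ⊤ : Submodule O M)))) := by
      rw [Subtype.range_coe]
      intro n _
      exact span_O_le_span_k _ Y (by rw [hYspan]; trivial)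
    let bY := Module.Basis.mk hYind hYsp
    -- the image of `X` is linearly independent over the residue field
    have hXind : LinearIndependent (O ⧸ IsLocalRing.maximalIdeal O)
        (fun x : X => (Submodule.Quotient.mk (x : M) :
          M ⧸ ((IsLocalRing.maximalIdeal O) • ⊤ : Submodule O M))) := by
      rw [linearIndependent_iff]
      intro l hl
      choose d hd using fun x : X => Ideal.Quotient.mk_surjective (l x)
      have hm0 : (∑ x ∈ l.support, d x • (x : M)) ∈
          ((IsLocalRing.maximalIdeal O) • ⊤ : Submodule O M) := by
        rw [← Submodule.Quotient.mk_eq_zero]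
        have hmk : (Submodule.Quotient.mk (∑ x ∈ l.support, d x • (x : M)) :
            M ⧸ ((IsLocalRing.maximalIdeal O) • ⊤ : Submodule O M)) =
            ∑ x ∈ l.support, l x • (Submodule.Quotient.mk (x : M) : _) := by
          show (Submodule.mkQ ((IsLocalRing.maximalIdeal O) • ⊤ : Submodule O M))
              (∑ x ∈ l.support, d x • (x : M)) = _
          rw [map_sum]
          refine Finset.sum_congr rfl fun x _ => ?_
          rw [Submodule.mkQ_apply, Submodule.Quotient.mk_smul, ← hd x, osmul_eq]
        rw [hmk]
        rw [Finsupp.linearCombination_apply, Finsupp.sum] at hl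
        exact hl
      rw [mem_ismt_iff bX] at hm0
      ext x'
      by_cases hx' : x' ∈ l.support
      · have hco : bX.repr (∑ x ∈ l.support, d x • (x : M)) x' = d x' := by
          rw [map_sum, Finsupp.finset_sum_apply]
          have : ∀ x ∈ l.support, (bX.repr (d x • (x : M))) x' =
              if x = x' then d x else 0 := by
            intro x _
            rw [map_smul, Finsupp.smul_apply, ← hbX x, Module.Basis.repr_self,
              Finsupp.single_apply]
            simp only [smul_eq_mul, mul_ite, mul_one, mul_zero]
          rw [Finset.sum_congr rfl this, Finset.sum_ite_eq' l.support x' (fun x => d x)]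
          simp [hx']
        have h1 := hm0 x'
        rw [hco] at h1
        rw [← hd x', Ideal.Quotient.eq_zero_iff_mem.mpr h1]
        rfl
      · simpa using Finsupp.notMem_support_iff.mp hx'
    -- the image of `X` spans over the residue field
    have hXsp : ⊤ ≤ Submodule.span (O ⧸ IsLocalRing.maximalIdeal O)
        (Set.range (fun x : X => (Submodule.Quotient.mk (x : M) :
          M ⧸ ((IsLocalRing.maximalIdeal O) • ⊤ : Submodule O M)))) := by
      intro n _
      obtain ⟨m, rfl⟩ := Submodule.Quotient.mk_surjective _ n
      have hspanX : Submodule.span O X = ⊤ := by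
        have hrange : Set.range (fun x : X => bX x) = X := by
          have : (fun x : X => bX x) = (fun x : X => (x : M)) := funext hbX
          rw [this, Subtype.range_coe]
        rw [← hrange]
        exact bX.span_eq
      have h1 : (Submodule.Quotient.mk m :
          M ⧸ ((IsLocalRing.maximalIdeal O) • ⊤ : Submodule O M)) ∈
          Submodule.span O ((fun m : M => (Submodule.Quotient.mk m :
            M ⧸ ((IsLocalRing.maximalIdeal O) • ⊤ : Submodule O M))) '' X) := by
        have h2 : (Submodule.Quotient.mk m : M ⧸ _) ∈
            Submodule.map (Submodule.mkQ ((IsLocalRing.maximalIdeal O) • ⊤ : Submodule O M))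
              (Submodule.span O X) :=
          Submodule.mem_map_of_mem (by rw [hspanX]; trivial)
        rw [Submodule.map_span] at h2
        exact h2
      have h3 := span_O_le_span_k _ _ h1
      have h4 : (fun m : M => (Submodule.Quotient.mk m :
          M ⧸ ((IsLocalRing.maximalIdeal O) • ⊤ : Submodule O M))) '' X =
          Set.range (fun x : X => (Submodule.Quotient.mk (x : M) : _)) :=
        Set.image_eq_range _ _
      rw [h4] at h3
      exact h3
    let bXbar := Module.Basis.mk hXind hXsp
    exact ⟨bXbar.indexEquiv bY, trivial⟩
  obtain ⟨e, -⟩ := hcard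
  -- the endomorphism sending the basis X to Z
  let f : M →ₗ[O] M := (bX.constr O) (fun x : X => σ (e x))
  have hfb : ∀ x : X, f (bX x) = σ (e x) := fun x => bX.constr_basis O _ x
  have hfsurj : LinearMap.range f = ⊤ := by
    rw [← top_le_iff, ← hspanZ, Submodule.span_le]
    rintro z ⟨y, hy, rfl⟩
    exact ⟨bX (e.symm ⟨y, hy⟩), by rw [hfb, Equiv.apply_symm_apply]⟩
  have hfinj : Function.Injective f :=
    OrzechProperty.injective_of_surjective_endomorphism f
      (LinearMap.range_eq_top.mp hfsurj)
  have hind1 : LinearIndependent O (fun x : X => σ (e x)) := by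
    have h := bX.linearIndependent.map' f (LinearMap.ker_eq_bot.mpr hfinj)
    convert h using 1
    funext x
    rw [Function.comp_apply, hfb]
    rfl
  let ε : X ≃ (σ '' Y : Set M) := Equiv.ofBijective
    (fun x => ⟨σ (e x), ⟨e x, (e x).2, rfl⟩⟩)
    ⟨fun a b h => by
        apply e.injective
        apply Subtype.ext
        exact hσinj (congrArg Subtype.val h),
      by rintro ⟨z, y, hy, rfl⟩
         exact ⟨e.symm ⟨y, hy⟩, by simp⟩⟩
  have hind2 : LinearIndependent O (fun z : (σ '' Y : Set M) => (z : M)) := by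
    refine (linearIndependent_equiv ε).mp ?_
    exact hind1
  let bZ : Module.Basis (σ '' Y : Set M) O M := Module.Basis.mk hind2
    (by rw [Subtype.range_coe]; exact hspanZ.ge)
  exact ⟨bZ, fun z => Module.Basis.mk_apply _ _ z, hZstable, hZY⟩
end

section
/- Let G be a finite group, N a normal subgroup, D ≤ G a subgroup, and j an idempotent in the fixed-point algebra (O[N])^D. Suppose for x ∈ N_G(D)∩[G/N]-representative there exists a unit a_x in ((j·O[N]·j)^D)^× with a_x⁻¹ x j = j a_x⁻¹ x in O[G]. If Ω is a D×D-stable basis of j·O[N]·j consisting of invertible elements (of j·O[N]·j with identity j), then Ω_x := {ω·a_x⁻¹x·j : ω ∈ Ω} is a D×D-stable linearly independent set in j·O[N]x·j, with d₁(ω a_x⁻¹ x)d₂ = (d₁ ω (ˣd₂)) a_x⁻¹ x for all d₁, d₂ ∈ D. -/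
/-- The computation in Proposition 2.2: if `Ω` is a `D×D`-stable basis of `jO[N]j`
consisting of invertible elements (w.r.t. the identity `j`), and `a_x` is a `D`-fixed
unit of `(jO[N]j)^D` with `a_x⁻¹ x j = j a_x⁻¹ x`, then
`Ω_x = {ω·a_x⁻¹x·j : ω ∈ Ω}` is a `D×D`-stable linearly independent subset of
`j·O[Nx]·j`, and `d₁(ω a_x⁻¹ x)d₂ = (d₁ ω (ˣd₂)) a_x⁻¹ x` for `d₁, d₂ ∈ D`. -/
theorem stmt_17 {O : Type*} [CommRing O] {G : Type*} [Group G] [Finite G]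
    (N : Subgroup G) [N.Normal] (D : Subgroup G) (hDN : D ≤ N)
    (x : G) (hx : ∀ d ∈ D, x * d * x⁻¹ ∈ D)
    (j : MonoidAlgebra O G)
    (hjN : ∀ g : G, j.coeff g ≠ 0 → g ∈ N) (hjidem : j * j = j)
    (hjD : ∀ d ∈ D, MonoidAlgebra.of O G d * j = j * MonoidAlgebra.of O G d)
    (a b : MonoidAlgebra O G)
    (haN : ∀ g : G, a.coeff g ≠ 0 → g ∈ N) (hbN : ∀ g : G, b.coeff g ≠ 0 → g ∈ N)
    (hab : a * b = j ∧ b * a = j ∧ j * a * j = a ∧ j * b * j = b)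
    (haD : ∀ d ∈ D, MonoidAlgebra.of O G d * a = a * MonoidAlgebra.of O G d)
    (hcomm : b * MonoidAlgebra.of O G x * j = j * (b * MonoidAlgebra.of O G x))
    (Ω : Set (MonoidAlgebra O G))
    (hΩj : ∀ ω ∈ Ω, j * ω * j = ω ∧ ∀ g : G, ω.coeff g ≠ 0 → g ∈ N)
    (hΩunit : ∀ ω ∈ Ω, ∃ ω' : MonoidAlgebra O G, ω * ω' = j ∧ ω' * ω = j)
    (hΩstable : ∀ d₁ ∈ D, ∀ d₂ ∈ D, ∀ ω ∈ Ω,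
      MonoidAlgebra.of O G d₁ * ω * MonoidAlgebra.of O G d₂ ∈ Ω)
    (hΩindep : LinearIndependent O ((↑) : Ω → MonoidAlgebra O G)) :
    LinearIndependent O
      ((↑) : {y : MonoidAlgebra O G | ∃ ω ∈ Ω, y = ω * b * MonoidAlgebra.of O G x * j}
        → MonoidAlgebra O G) ∧
    (∀ y ∈ {y : MonoidAlgebra O G | ∃ ω ∈ Ω, y = ω * b * MonoidAlgebra.of O G x * j},
      ∃ c ∈ Submodule.span O
          {z : MonoidAlgebra O G | ∃ n ∈ N, z = MonoidAlgebra.of O G (n * x)},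
        y = j * c * j) ∧
    (∀ d₁ ∈ D, ∀ d₂ ∈ D, ∀ ω ∈ Ω,
      MonoidAlgebra.of O G d₁ * (ω * b * MonoidAlgebra.of O G x) * MonoidAlgebra.of O G d₂
        = (MonoidAlgebra.of O G d₁ * ω * MonoidAlgebra.of O G (x * d₂ * x⁻¹))
            * b * MonoidAlgebra.of O G x) ∧
    (∀ d₁ ∈ D, ∀ d₂ ∈ D,
      ∀ y ∈ {y : MonoidAlgebra O G | ∃ ω ∈ Ω, y = ω * b * MonoidAlgebra.of O G x * j},
        MonoidAlgebra.of O G d₁ * y * MonoidAlgebra.of O G d₂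
          ∈ {y : MonoidAlgebra O G | ∃ ω ∈ Ω, y = ω * b * MonoidAlgebra.of O G x * j}) := by
  classical
  obtain ⟨hab1, hab2, haj, hbj⟩ := hab
  set ox := MonoidAlgebra.of O G with hox
  -- basic corner identities
  have hjb : j * b = b := by
    conv_lhs => rw [← hbj]
    simp only [← mul_assoc]
    rw [hjidem, hbj]
  have hbj' : b * j = b := by
    conv_lhs => rw [← hbj]
    rw [mul_assoc, hjidem, hbj]
  have hΩjl : ∀ ω ∈ Ω, j * ω = ω := by
    intro ω hω
    conv_lhs => rw [← (hΩj ω hω).1]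
    simp only [← mul_assoc]
    rw [hjidem, (hΩj ω hω).1]
  have hΩjr : ∀ ω ∈ Ω, ω * j = ω := by
    intro ω hω
    conv_lhs => rw [← (hΩj ω hω).1]
    rw [mul_assoc, hjidem, (hΩj ω hω).1]
  have hcomm' : b * (ox x * j) = j * (b * ox x) := by rw [← mul_assoc, hcomm]
  -- key : dropping the trailing j
  have key : ∀ ω ∈ Ω, ω * b * ox x * j = ω * b * ox x := by
    intro ω hω
    have h : ω * (b * (ox x * j)) = ω * (b * ox x) := by
      rw [hcomm', ← mul_assoc, hΩjr ω hω]
    simpa only [mul_assoc] using h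
  -- retraction
  have key2 : ∀ ω ∈ Ω, ω * b * ox x * j * (ox x⁻¹ * a) = ω := by
    intro ω hω
    rw [key ω hω]
    have hxx : ox x * (ox x⁻¹ * a) = a := by
      rw [← mul_assoc, ← map_mul]
      simp
    calc ω * b * ox x * (ox x⁻¹ * a) = ω * (b * (ox x * (ox x⁻¹ * a))) := by
          simp only [mul_assoc]
      _ = ω * (b * a) := by rw [hxx]
      _ = ω * j := by rw [hab2]
      _ = ω := hΩjr ω hω
  -- b commutes with D
  have hbD : ∀ d ∈ D, b * ox d = ox d * b := by
    intro d hd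
    calc b * ox d = b * ox d * j := by rw [mul_assoc, hjD d hd, ← mul_assoc, hbj']
      _ = b * ox d * (a * b) := by rw [hab1]
      _ = b * (ox d * a) * b := by simp only [mul_assoc]
      _ = b * (a * ox d) * b := by rw [haD d hd]
      _ = j * ox d * b := by rw [← mul_assoc, hab2]
      _ = ox d * b := by rw [← hjD d hd, mul_assoc, hjb]
  -- part 3
  have part3 : ∀ d₁ ∈ D, ∀ d₂ ∈ D, ∀ ω ∈ Ω,
      ox d₁ * (ω * b * ox x) * ox d₂
        = (ox d₁ * ω * ox (x * d₂ * x⁻¹)) * b * ox x := by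
    intro d₁ _ d₂ hd₂ ω _
    have h1 : ox (x * d₂ * x⁻¹) * b = b * ox (x * d₂ * x⁻¹) :=
      (hbD _ (hx d₂ hd₂)).symm
    have h2 : ox (x * d₂ * x⁻¹) * ox x = ox x * ox d₂ := by
      rw [← map_mul, ← map_mul]
      congr 1
      group
    simp only [mul_assoc]
    rw [← h2, ← mul_assoc b, ← h1, mul_assoc, mul_assoc x d₂ x⁻¹]
  -- the set
  refine ⟨?_, ?_, part3, ?_⟩
  · -- linear independence
    set S : Set (MonoidAlgebra O G) :=
      {y : MonoidAlgebra O G | ∃ ω ∈ Ω, y = ω * b * ox x * j} with hS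
    have hmemΩ : ∀ s : S, (s : MonoidAlgebra O G) * (ox x⁻¹ * a) ∈ Ω := by
      rintro ⟨s, ω, hω, rfl⟩
      simpa [key2 ω hω] using hω
    set h : S → Ω := fun s => ⟨(s : MonoidAlgebra O G) * (ox x⁻¹ * a), hmemΩ s⟩ with hh
    have hinj : Function.Injective h := by
      rintro ⟨s₁, hs₁⟩ ⟨s₂, hs₂⟩ heq
      obtain ⟨ω₁, hω₁, rfl⟩ := hs₁
      obtain ⟨ω₂, hω₂, rfl⟩ := hs₂
      have : ω₁ = ω₂ := by
        have := congrArg (fun z : Ω => (z : MonoidAlgebra O G)) heq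
        simpa [hh, key2 ω₁ hω₁, key2 ω₂ hω₂] using this
      simp [this]
    have hcomp : LinearIndependent O
        ((LinearMap.mulRight O (ox x⁻¹ * a)) ∘ ((↑) : S → MonoidAlgebra O G)) := by
      have : (LinearMap.mulRight O (ox x⁻¹ * a)) ∘ ((↑) : S → MonoidAlgebra O G)
          = ((↑) : Ω → MonoidAlgebra O G) ∘ h := by
        funext s
        simp [hh, LinearMap.mulRight_apply, mul_assoc]
      rw [this]
      exact hΩindep.comp h hinj
    exact LinearIndependent.of_comp _ hcomp
  · -- membership in j * O[Nx] * j
    rintro y ⟨ω, hω, rfl⟩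
    refine ⟨ω * b * ox x, ?_, ?_⟩
    · have hsupp : ∀ g : G, (ω * b).coeff g ≠ 0 → g ∈ N := by
        intro g hg
        have hmem : g ∈ (ω * b).coeff.support := Finsupp.mem_support_iff.2 hg
        have := MonoidAlgebra.support_coeff_mul_subset ω b hmem
        rw [Finset.mem_mul] at this
        obtain ⟨g₁, hg₁, g₂, hg₂, hprod⟩ := this
        rw [← hprod]
        exact N.mul_mem ((hΩj ω hω).2 g₁ (Finsupp.mem_support_iff.1 hg₁))
          (hbN g₂ (Finsupp.mem_support_iff.1 hg₂))
      have hrw : ω * b * ox x = (ω * b).coeff.sum fun g c => c • ox (g * x) := by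
        conv_lhs => rw [← MonoidAlgebra.sum_coeff_single (ω * b)]
        rw [Finsupp.sum_mul]
        refine Finsupp.sum_congr fun g _ => ?_
        simp [hox, MonoidAlgebra.of_apply, MonoidAlgebra.single_mul_single,
          Finsupp.smul_single']
      rw [hrw]
      refine Submodule.finsuppSum_mem O _ _ _ fun g hg => ?_
      exact Submodule.smul_mem _ _ (Submodule.subset_span ⟨g, hsupp g hg, rfl⟩)
    · have hjl : j * (ω * b * ox x) = ω * b * ox x := by
        simp only [← mul_assoc]
        rw [hΩjl ω hω]
      rw [hjl]
  · -- D×D stability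
    rintro d₁ hd₁ d₂ hd₂ y ⟨ω, hω, rfl⟩
    rw [key ω hω, part3 d₁ hd₁ d₂ hd₂ ω hω]
    have hmem : ox d₁ * ω * ox (x * d₂ * x⁻¹) ∈ Ω :=
      hΩstable d₁ hd₁ _ (hx d₂ hd₂) ω hω
    exact ⟨_, hmem, (key _ hmem).symm⟩
end
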